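/- arXiv:2012.07638 — 4 statements merged into one kernel-verified Lean document; each statement's English description precedes it below -/
import Mathlib

section
/- If f ∈ 𝒰 (f analytic on 𝔻, f(0)=0, f'(0)=1, |(z/f(z))² f'(z) − 1| < 1 on 𝔻), then Re(2·z·f'(z)/f(z) − z·f''(z)/f'(z)) > 0 for all |z| < r₁, where r₁ ∈ (0,1) is the root of r³ + 2r² − 2 = 0 (r₁ ≈ 0.839). -/
open Complex Metric

noncomputable def mobUD (c u : ℂ) : ℂ := (c - u) / (1 - (starRingEnd ℂ) c * u)

lemma mobUD_den_ne {c u : ℂ} (hc : ‖c‖ < 1) (hu : ‖u‖ < 1) :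
    1 - (starRingEnd ℂ) c * u ≠ 0 := by
  intro h
  have h1 : (starRingEnd ℂ) c * u = 1 := by linear_combination -h
  have := congrArg (‖·‖) h1
  rw [norm_mul, norm_one, Complex.norm_conj] at this
  nlinarith [norm_nonneg c, norm_nonneg u]

lemma mobUD_normSq {c u : ℂ} :
    normSq (1 - (starRingEnd ℂ) c * u) - normSq (c - u)
      = (1 - normSq c) * (1 - normSq u) := by
  simp only [Complex.normSq_apply, Complex.sub_re, Complex.sub_im, Complex.mul_re,
    Complex.mul_im, Complex.conj_re, Complex.conj_im, Complex.one_re, Complex.one_im]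
  ring

lemma mobUD_maps {c u : ℂ} (hc : ‖c‖ < 1) (hu : ‖u‖ < 1) :
    ‖mobUD c u‖ < 1 := by
  have hden := mobUD_den_ne hc hu
  have h1 : normSq c < 1 := by rw [← Complex.sq_norm]; nlinarith [norm_nonneg c]
  have h2 : normSq u < 1 := by rw [← Complex.sq_norm]; nlinarith [norm_nonneg u]
  have h3 : normSq (c - u) < normSq (1 - (starRingEnd ℂ) c * u) := by
    nlinarith [mobUD_normSq (c := c) (u := u), normSq_nonneg (c - u)]
  have h4 : ‖c - u‖ < ‖1 - (starRingEnd ℂ) c * u‖ := by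
    have := Complex.sq_norm (c - u)
    have := Complex.sq_norm (1 - (starRingEnd ℂ) c * u)
    nlinarith [norm_nonneg (c - u), norm_nonneg (1 - (starRingEnd ℂ) c * u)]
  rw [mobUD, norm_div, div_lt_one (lt_of_le_of_lt (norm_nonneg _) h4)]
  exact h4

lemma mobUD_diff {c u : ℂ} (h : 1 - (starRingEnd ℂ) c * u ≠ 0) :
    DifferentiableAt ℂ (mobUD c) u := by
  have h3 : mobUD c = fun w => (c - w) / (1 - (starRingEnd ℂ) c * w) := rfl
  rw [h3]
  exact DifferentiableAt.div (by fun_prop) (by fun_prop) h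

lemma mobUD_deriv (c u : ℂ) (h : 1 - (starRingEnd ℂ) c * u ≠ 0) :
    deriv (mobUD c) u = ((starRingEnd ℂ) c * c - 1) / (1 - (starRingEnd ℂ) c * u) ^ 2 := by
  have hd1 : DifferentiableAt ℂ (fun w : ℂ => c - w) u := by fun_prop
  have hd2 : DifferentiableAt ℂ (fun w : ℂ => 1 - (starRingEnd ℂ) c * w) u := by fun_prop
  have h4 : deriv (fun w : ℂ => (c - w) / (1 - (starRingEnd ℂ) c * w)) u =
      (deriv (fun w : ℂ => c - w) u * (1 - (starRingEnd ℂ) c * u)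
        - (c - u) * deriv (fun w : ℂ => 1 - (starRingEnd ℂ) c * w) u)
        / (1 - (starRingEnd ℂ) c * u) ^ 2 := deriv_div hd1 hd2 h
  have h1 : deriv (fun w : ℂ => c - w) u = -1 := by
    rw [deriv_const_sub]; simp
  have h2 : deriv (fun w : ℂ => 1 - (starRingEnd ℂ) c * w) u = -((starRingEnd ℂ) c) := by
    rw [deriv_const_sub, deriv_const_mul_field]; simp
  have h3 : mobUD c = fun w => (c - w) / (1 - (starRingEnd ℂ) c * w) := rfl
  rw [h3, h4, h1, h2]
  field_simp
  ring

lemma schwarz_pick {ψ : ℂ → ℂ} (hd : DifferentiableOn ℂ ψ (ball (0:ℂ) 1))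
    (hb : ∀ u ∈ ball (0:ℂ) 1, ‖ψ u‖ ≤ 1) {z : ℂ} (hz : z ∈ ball (0:ℂ) 1) :
    ‖deriv ψ z‖ * (1 - ‖z‖ ^ 2) ≤ 1 - ‖ψ z‖ ^ 2 := by
  by_cases hone : ∃ u ∈ ball (0:ℂ) 1, ‖ψ u‖ = 1
  · obtain ⟨u, hu, habs⟩ := hone
    have hmax : IsMaxOn (norm ∘ ψ) (ball (0:ℂ) 1) u := by
      intro v hv
      simp only [Function.comp_apply, habs]
      exact hb v hv
    have hconst := Complex.eqOn_of_isPreconnected_of_isMaxOn_norm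
      (convex_ball (0:ℂ) 1).isPreconnected isOpen_ball hd hu hmax
    have hev : ψ =ᶠ[nhds z] fun _ => ψ u := by
      filter_upwards [isOpen_ball.mem_nhds hz] with v hv
      exact hconst hv
    have hd0 : deriv ψ z = 0 := by rw [hev.deriv_eq]; exact deriv_const _ _
    have hz1 : ‖ψ z‖ = 1 := by rw [hconst hz]; exact habs
    rw [hd0, hz1]; simp
  · push_neg at hone
    have hstrict : ∀ u ∈ ball (0:ℂ) 1, ‖ψ u‖ < 1 :=
      fun u hu => lt_of_le_of_ne (hb u hu) (hone u hu)
    set a := ψ z with ha_def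
    have hza : ‖z‖ < 1 := mem_ball_zero_iff.1 hz
    have haa : ‖a‖ < 1 := hstrict z hz
    set F := fun u => mobUD a (ψ (mobUD z u)) with hF_def
    have hmapsF : Set.MapsTo F (ball (0:ℂ) 1) (ball (0:ℂ) 1) := by
      intro u hu
      have h1 := mobUD_maps hza (mem_ball_zero_iff.1 hu)
      have h2 := hstrict _ (mem_ball_zero_iff.2 h1)
      exact mem_ball_zero_iff.2 (mobUD_maps haa h2)
    have hmz0 : mobUD z 0 = z := by simp [mobUD]
    have hmaa : mobUD a a = 0 := by simp [mobUD]
    have hF0 : F 0 = 0 := by rw [hF_def]; simp only [hmz0, ← ha_def, hmaa]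
    have hdF : DifferentiableOn ℂ F (ball (0:ℂ) 1) := by
      intro u hu
      have h1 : ‖mobUD z u‖ < 1 := mobUD_maps hza (mem_ball_zero_iff.1 hu)
      have hd1 : DifferentiableAt ℂ (mobUD z) u := mobUD_diff (mobUD_den_ne hza (mem_ball_zero_iff.1 hu))
      have hd2 : DifferentiableAt ℂ ψ (mobUD z u) :=
        hd.differentiableAt (isOpen_ball.mem_nhds (mem_ball_zero_iff.2 h1))
      have hd3 : DifferentiableAt ℂ (mobUD a) (ψ (mobUD z u)) :=
        mobUD_diff (mobUD_den_ne haa (hstrict _ (mem_ball_zero_iff.2 h1)))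
      exact ((hd3.comp u (hd2.comp u hd1))).differentiableWithinAt
    have hschwarz : ‖deriv F 0‖ ≤ 1 :=
      Complex.norm_deriv_le_one_of_mapsTo_ball hdF (by rw [hF0]; exact hmapsF.mono_right ball_subset_closedBall) one_pos
    -- chain rule
    have hd1 : DifferentiableAt ℂ (mobUD z) 0 := mobUD_diff (by simp)
    have hd2 : DifferentiableAt ℂ ψ z := hd.differentiableAt (isOpen_ball.mem_nhds hz)
    have hd2' : DifferentiableAt ℂ (ψ ∘ mobUD z) 0 := by
      apply DifferentiableAt.comp
      · rwa [hmz0]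
      · exact hd1
    have hd3 : DifferentiableAt ℂ (mobUD a) ((ψ ∘ mobUD z) 0) := by
      have : (ψ ∘ mobUD z) 0 = a := by simp [Function.comp, hmz0, ha_def]
      rw [this]
      exact mobUD_diff (mobUD_den_ne haa haa)
    have hchain : deriv F 0 = deriv (mobUD a) a * (deriv ψ z * deriv (mobUD z) 0) := by
      have e1 : F = (mobUD a) ∘ (ψ ∘ mobUD z) := rfl
      rw [e1, deriv_comp (x := 0) hd3 hd2']
      have e2 : (ψ ∘ mobUD z) 0 = a := by simp [Function.comp, hmz0, ha_def]
      rw [e2, deriv_comp (x := 0) (by rwa [hmz0]) hd1, hmz0]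
    have hna : ((1 : ℂ) - (starRingEnd ℂ) a * a) = ((1 - ‖a‖ ^ 2 : ℝ) : ℂ) := by
      rw [← Complex.normSq_eq_conj_mul_self, ← Complex.sq_norm]
      push_cast
      ring
    have hnz : ((starRingEnd ℂ) z * z - 1) = ((‖z‖ ^ 2 - 1 : ℝ) : ℂ) := by
      rw [← Complex.normSq_eq_conj_mul_self, ← Complex.sq_norm]
      push_cast
      ring
    have hda : deriv (mobUD a) a = ((‖a‖ ^ 2 - 1 : ℝ) : ℂ) / ((1 - ‖a‖ ^ 2 : ℝ) : ℂ) ^ 2 := by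
      rw [mobUD_deriv a a (mobUD_den_ne haa haa), hna]
      congr 1
      rw [← Complex.normSq_eq_conj_mul_self, ← Complex.sq_norm]
      push_cast
      ring
    have hdz : deriv (mobUD z) 0 = ((‖z‖ ^ 2 - 1 : ℝ) : ℂ) := by
      rw [mobUD_deriv z 0 (by simp), hnz]
      simp
    have h1a : (0:ℝ) < 1 - ‖a‖ ^ 2 := by nlinarith [norm_nonneg a]
    have h1z : (0:ℝ) < 1 - ‖z‖ ^ 2 := by nlinarith [norm_nonneg z]
    have habsF : ‖deriv F 0‖
        = (1 / (1 - ‖a‖ ^ 2)) * (‖deriv ψ z‖ * (1 - ‖z‖ ^ 2)) := by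
      rw [hchain, norm_mul, norm_mul, hda, hdz, norm_div, norm_pow]
      rw [Complex.norm_real, Complex.norm_real, Complex.norm_real, Real.norm_eq_abs, Real.norm_eq_abs, Real.norm_eq_abs]
      rw [abs_of_pos h1a, abs_of_neg (by linarith : (‖z‖ ^ 2 - 1 : ℝ) < 0),
        abs_of_neg (by linarith : (‖a‖ ^ 2 - 1 : ℝ) < 0)]
      field_simp
      ring
    rw [habsF] at hschwarz
    calc ‖deriv ψ z‖ * (1 - ‖z‖ ^ 2)
        = (1 - ‖a‖ ^ 2) * ((1 / (1 - ‖a‖ ^ 2)) * (‖deriv ψ z‖ * (1 - ‖z‖ ^ 2))) := by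
          field_simp
      _ ≤ (1 - ‖a‖ ^ 2) * 1 := by
          exact mul_le_mul_of_nonneg_left hschwarz h1a.le
      _ = 1 - ‖ψ z‖ ^ 2 := by rw [← ha_def]; ring


lemma core_ineq (r s x : ℝ) (hr : 0 < r) (hcub : r^3 + 2*r^2 < 2)
    (hs0 : 0 ≤ s) (hs1 : s ≤ 1) (hx1 : -(r^2*s) ≤ x) (hx2 : x ≤ r^2*s) :
    (r^3*(1-s^2))^2*(1+2*x+(r^2*s)^2) < 4*(1+x)^2*(1-r^2)^2 := by
  have hr1 : r < 1 := by nlinarith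
  have hp : r^2*s ≤ s := by nlinarith
  have hps : (r^2*s)^2 ≤ s^2 := by nlinarith
  have key : (1-s^2)^2*(1+2*x+(r^2*s)^2) ≤ (1+x)^2 := by
    nlinarith [sq_nonneg (x + 2*s^2 - s^4), mul_nonneg (sq_nonneg (1-s^2)) (show (0:ℝ) ≤ 2*s^2 - s^4 - (r^2*s)^2 by nlinarith [hps, mul_nonneg (sq_nonneg s) (show (0:ℝ) ≤ 1 - s^2 by nlinarith)])]
  have hM : 0 ≤ 1+2*x+(r^2*s)^2 := by nlinarith [sq_nonneg (1+x)]
  have hx0 : 0 < 1 + x := by nlinarith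
  have hB : 0 < 1 - r^2 := by nlinarith
  have h6 : r^6 < 4*(1-r^2)^2 := by nlinarith
  calc (r^3*(1-s^2))^2*(1+2*x+(r^2*s)^2) = r^6*((1-s^2)^2*(1+2*x+(r^2*s)^2)) := by ring
    _ ≤ r^6*(1+x)^2 := by nlinarith [pow_pos hr 6]
    _ < 4*(1-r^2)^2*(1+x)^2 := by nlinarith [sq_nonneg (1+x), pow_pos hr 6, mul_pos hx0 hx0]
    _ = 4*(1+x)^2*(1-r^2)^2 := by ring

open Complex Metric in
lemma analyticOnNhd_dslope {g : ℂ → ℂ} (hg : AnalyticOnNhd ℂ g (ball (0:ℂ) 1)) :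
    AnalyticOnNhd ℂ (dslope g 0) (ball (0:ℂ) 1) := by
  intro z hz
  rcases eq_or_ne z 0 with rfl | hne
  · rcases hg 0 hz with ⟨p, hp⟩
    exact hp.has_fpower_series_dslope_fslope.analyticAt
  · have h1 : AnalyticAt ℂ (fun w => (g w - g 0) / (w - 0)) z := by
      exact ((hg z hz).sub analyticAt_const).div (analyticAt_id.sub analyticAt_const)
        (sub_ne_zero.2 hne)
    have h2 : slope g 0 = fun w => (g w - g 0) / (w - 0) := by
      funext w; rw [slope_def_field]
    exact (h2 ▸ h1).congr (dslope_eventuallyEq_slope_of_ne g hne).symm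
open Complex Metric


set_option maxHeartbeats 2000000 in
theorem U_D_re_pos (f : ℂ → ℂ) (r₁ : ℝ)
    (hr₁ : r₁ ∈ Set.Ioo (0 : ℝ) 1)
    (hroot : r₁ ^ 3 + 2 * r₁ ^ 2 - 2 = 0)
    (hf : AnalyticOnNhd ℂ f (ball (0 : ℂ) 1))
    (hf0 : f 0 = 0) (hf'0 : deriv f 0 = 1)
    (hU : ∀ z ∈ ball (0 : ℂ) 1, z ≠ 0 →
      ‖(z / f z) ^ 2 * deriv f z - 1‖ < 1) :
    ∀ z : ℂ, ‖z‖ < r₁ → z ≠ 0 →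
      0 < (2 * (z * deriv f z / f z) - z * deriv (deriv f) z / deriv f z).re := by
  obtain ⟨hr₁0, hr₁1⟩ := hr₁
  -- nonvanishing
  have hfne : ∀ w ∈ ball (0:ℂ) 1, w ≠ 0 → f w ≠ 0 := by
    intro w hw hwne hfw
    have h := hU w hw hwne
    rw [hfw, div_zero] at h
    simp only [ne_eq, OfNat.ofNat_ne_zero, not_false_eq_true, zero_pow, zero_mul, zero_sub,
      norm_neg, norm_one] at h
    exact absurd h (lt_irrefl 1)
  have hf'ne : ∀ w ∈ ball (0:ℂ) 1, w ≠ 0 → deriv f w ≠ 0 := by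
    intro w hw hwne hfw
    have h := hU w hw hwne
    rw [hfw, mul_zero, zero_sub] at h
    simp only [norm_neg, norm_one] at h
    exact absurd h (lt_irrefl 1)
  -- h = dslope f 0
  set h : ℂ → ℂ := dslope f 0 with hh_def
  have h0mem : (0:ℂ) ∈ ball (0:ℂ) 1 := by simp
  have hh : AnalyticOnNhd ℂ h (ball (0:ℂ) 1) := analyticOnNhd_dslope hf
  have hh0 : h 0 = 1 := by rw [hh_def, dslope_same]; exact hf'0
  have hfzh : ∀ w : ℂ, f w = w * h w := by
    intro w
    rcases eq_or_ne w 0 with rfl | hw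
    · simp [hf0]
    · rw [hh_def, dslope_of_ne f hw, slope_def_field, hf0]
      field_simp
      ring
  have hhne : ∀ w ∈ ball (0:ℂ) 1, h w ≠ 0 := by
    intro w hw
    rcases eq_or_ne w 0 with rfl | hwne
    · rw [hh0]; exact one_ne_zero
    · intro hhw
      exact hfne w hw hwne (by rw [hfzh w, hhw, mul_zero])
  -- W
  set W : ℂ → ℂ := fun w => deriv f w / (h w) ^ 2 - 1 with hW_def
  have hWa : AnalyticOnNhd ℂ W (ball (0:ℂ) 1) := by
    intro w hw
    exact (((hf.deriv w hw).div ((hh w hw).pow 2) (pow_ne_zero 2 (hhne w hw))).sub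
      analyticAt_const)
  have hW0 : W 0 = 0 := by rw [hW_def]; simp [hf'0, hh0]
  have hWeq : ∀ w ∈ ball (0:ℂ) 1, w ≠ 0 → W w = (w / f w) ^ 2 * deriv f w - 1 := by
    intro w hw hwne
    rw [hW_def]
    simp only
    congr 1
    have hfw := hfne w hw hwne
    have hhw := hhne w hw
    rw [hfzh w]
    field_simp
  have hWlt : ∀ w ∈ ball (0:ℂ) 1, ‖W w‖ < 1 := by
    intro w hw
    rcases eq_or_ne w 0 with rfl | hwne
    · rw [hW0]; simp
    · rw [hWeq w hw hwne]; exact hU w hw hwne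
  -- second derivative relation
  have hdh0 : DifferentiableAt ℂ (deriv h) 0 := (hh.deriv 0 h0mem).differentiableAt
  have hhd : ∀ w ∈ ball (0:ℂ) 1, DifferentiableAt ℂ h w :=
    fun w hw => (hh w hw).differentiableAt
  have hfeq : f = fun w => w * h w := funext hfzh
  have hderiv_f : ∀ w ∈ ball (0:ℂ) 1, deriv f w = h w + w * deriv h w := by
    intro w hw
    rw [hfeq, deriv_fun_mul differentiableAt_fun_id (hhd w hw)]
    simp
  have hderiv_f_ev : deriv f =ᶠ[nhds 0] fun w => h w + w * deriv h w := by
    filter_upwards [isOpen_ball.mem_nhds h0mem] with w hw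
    exact hderiv_f w hw
  have hf''2h : deriv (deriv f) 0 = 2 * deriv h 0 := by
    rw [hderiv_f_ev.deriv_eq]
    rw [deriv_fun_add (hhd 0 h0mem) (show DifferentiableAt ℂ (fun w => w * deriv h w) 0 from differentiableAt_fun_id.mul hdh0)]
    rw [deriv_fun_mul differentiableAt_fun_id hdh0]
    simp [two_mul]
  have hdf' : DifferentiableAt ℂ (deriv f) 0 := (hf.deriv 0 h0mem).differentiableAt
  have hhsq : (fun w => h w ^ 2) = fun w => h w * h w := by funext w; ring
  have hW'0 : deriv W 0 = 0 := by
    rw [hW_def]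
    have e1 : deriv (fun w => deriv f w / h w ^ 2 - 1) 0
        = deriv (fun w => deriv f w / h w ^ 2) 0 := by
      rw [deriv_sub_const]
    rw [e1, deriv_fun_div hdf' (by rw [hhsq]; exact (hhd 0 h0mem).mul (hhd 0 h0mem))
      (by rw [hh0]; norm_num)]
    rw [hhsq, deriv_fun_mul (hhd 0 h0mem) (hhd 0 h0mem)]
    rw [hf''2h, hh0, hf'0]
    ring
  -- W1 and psi
  set W₁ : ℂ → ℂ := dslope W 0 with hW1_def
  set ψ : ℂ → ℂ := dslope W₁ 0 with hψ_def
  have hW1a : AnalyticOnNhd ℂ W₁ (ball (0:ℂ) 1) := analyticOnNhd_dslope hWa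
  have hψa : AnalyticOnNhd ℂ ψ (ball (0:ℂ) 1) := analyticOnNhd_dslope hW1a
  have hW10 : W₁ 0 = 0 := by rw [hW1_def, dslope_same]; exact hW'0
  have hWfac1 : ∀ w : ℂ, W w = w * W₁ w := by
    intro w
    have := sub_smul_dslope W 0 w
    rw [sub_zero, smul_eq_mul] at this
    rw [← hW1_def] at this
    rw [this, hW0, sub_zero]
  have hWfac : ∀ w : ℂ, W w = w ^ 2 * ψ w := by
    intro w
    have h2 := sub_smul_dslope W₁ 0 w
    rw [sub_zero, smul_eq_mul, hW10, sub_zero, ← hψ_def] at h2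
    rw [hWfac1 w, ← h2]
    ring
  -- bound |psi| ≤ 1
  have hψb : ∀ w ∈ ball (0:ℂ) 1, ‖ψ w‖ ≤ 1 := by
    intro w hw
    have hw1 : ‖w‖ < 1 := mem_ball_zero_iff.1 hw
    have key : ∀ R : ℝ, ‖w‖ < R → R < 1 → ‖ψ w‖ ≤ 1 / R ^ 2 := by
      intro R hR1 hR2
      have hR0 : 0 < R := lt_of_le_of_lt (norm_nonneg w) hR1
      set R' : ℝ := (R + 1) / 2 with hR'_def
      have hRR' : R < R' := by rw [hR'_def]; linarith
      have hR'1 : R' < 1 := by rw [hR'_def]; linarith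
      have hR'0 : 0 < R' := by linarith
      have hW1b : ∀ u ∈ ball (0:ℂ) R', ‖W₁ u‖ ≤ 1 / R' := by
        intro u hu
        refine Complex.norm_dslope_le_div_of_mapsTo_ball ?_ ?_ hu
        · exact (hWa.differentiableOn).mono (ball_subset_ball hR'1.le)
        · intro v hv
          rw [hW0, mem_closedBall_zero_iff]
          exact le_of_lt <| hWlt v (ball_subset_ball hR'1.le hv)
      have hψb1 : ‖ψ w‖ ≤ (1 / R) / R := by
        refine Complex.norm_dslope_le_div_of_mapsTo_ball ?_ ?_ (mem_ball_zero_iff.2 hR1)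
        · exact (hW1a.differentiableOn).mono (ball_subset_ball (by linarith))
        · intro v hv
          rw [hW10, mem_closedBall_zero_iff]
          apply le_of_lt
          calc ‖W₁ v‖ ≤ 1 / R' := hW1b v (ball_subset_ball hRR'.le hv)
            _ < 1 / R := by apply div_lt_div_of_pos_left one_pos hR0 hRR'
      calc ‖ψ w‖ = ‖ψ w‖ := rfl
        _ ≤ (1 / R) / R := hψb1
        _ = 1 / R ^ 2 := by field_simp
    by_contra hgt
    push_neg at hgt
    set t := ‖ψ w‖ with ht_def
    have ht0 : 0 < t := by linarith
    have hu0 : Real.sqrt (1 / t) < 1 := by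
      nlinarith [Real.sq_sqrt (show (0:ℝ) ≤ 1/t by positivity), Real.sqrt_nonneg (1/t),
        (show 1/t < 1 by rw [div_lt_one ht0]; linarith)]
    set u₀ : ℝ := Real.sqrt (1 / t) with hu₀_def
    have hu₀0 : 0 ≤ u₀ := Real.sqrt_nonneg _
    set R : ℝ := max ((‖w‖ + 1) / 2) ((u₀ + 1) / 2) with hR_def
    have hRw : ‖w‖ < R := by
      apply lt_max_of_lt_left; linarith
    have hR1 : R < 1 := by
      apply max_lt <;> [linarith; linarith]
    have hRu : u₀ < R := by
      apply lt_max_of_lt_right; linarith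
    have hsq : u₀ ^ 2 = 1 / t := by
      rw [hu₀_def, Real.sq_sqrt (by positivity)]
    have hR0 : 0 < R := lt_of_le_of_lt hu₀0 hRu
    have hltR : u₀ ^ 2 < R ^ 2 := by nlinarith
    have hkeyR := key R hRw hR1
    have h1R : 1 / R ^ 2 < t := by
      rw [div_lt_iff₀ (by positivity)]
      rw [hsq] at hltR
      calc (1:ℝ) = (1 / t) * t := by field_simp
        _ < R ^ 2 * t := by exact mul_lt_mul_of_pos_right hltR ht0
        _ = t * R ^ 2 := by ring
    linarith [hkeyR]
  -- main argument at z
  intro z hzr hzne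
  have hzball : z ∈ ball (0:ℂ) 1 := mem_ball_zero_iff.2 (lt_trans hzr hr₁1)
  have hfz : f z ≠ 0 := hfne z hzball hzne
  have hf'z : deriv f z ≠ 0 := hf'ne z hzball hzne
  have hhz : h z ≠ 0 := hhne z hzball
  have hWz1 : ‖W z‖ < 1 := hWlt z hzball
  have h1W : (1 : ℂ) + W z ≠ 0 := by
    intro h0
    have he : W z = -1 := by linear_combination h0
    rw [he] at hWz1
    simp at hWz1
  have hdψz : DifferentiableAt ℂ ψ z := (hψa z hzball).differentiableAt
  have hWfn : W = fun u => u ^ 2 * ψ u := funext hWfac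
  have hderivW : deriv W z = 2 * z * ψ z + z ^ 2 * deriv ψ z := by
    rw [hWfn, deriv_fun_mul (differentiableAt_pow 2) hdψz, deriv_pow_field 2]
    ring
  have hhzd : DifferentiableAt ℂ h z := hhd z hzball
  have hdf'z : DifferentiableAt ℂ (deriv f) z := (hf.deriv z hzball).differentiableAt
  have hd2' : deriv (fun w => h w ^ 2) z = deriv h z * h z + h z * deriv h z := by
    rw [hhsq, deriv_fun_mul hhzd hhzd]
  have hdsq : DifferentiableAt ℂ (fun w => h w ^ 2) z := by
    rw [hhsq]; exact hhzd.mul hhzd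
  have hderivW2 : deriv W z
      = (deriv (deriv f) z * h z ^ 2
          - deriv f z * (deriv h z * h z + h z * deriv h z)) / (h z ^ 2) ^ 2 := by
    rw [hW_def]
    have e1 : deriv (fun w => deriv f w / h w ^ 2 - 1) z
        = deriv (fun w => deriv f w / h w ^ 2) z := deriv_sub_const 1
    have e2 : deriv (fun w => deriv f w / h w ^ 2) z
        = (deriv (deriv f) z * h z ^ 2 - deriv f z * deriv (fun w => h w ^ 2) z)
          / (h z ^ 2) ^ 2 := deriv_div hdf'z hdsq (pow_ne_zero 2 hhz)
    rw [e1, e2, hd2']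
  have hA : f z = z * h z := hfzh z
  have hA' : deriv f z = h z + z * deriv h z := hderiv_f z hzball
  have hA'ne : h z + z * deriv h z ≠ 0 := by rw [← hA']; exact hf'z
  have hWzval : W z = deriv f z / h z ^ 2 - 1 := by rw [hW_def]
  have hW1val : (1:ℂ) + W z = deriv f z / h z ^ 2 := by rw [hWzval]; ring
  have hkey : 2 * (z * deriv f z / f z) - z * deriv (deriv f) z / deriv f z
      = 2 - z * deriv W z / (1 + W z) := by
    rw [hderivW2, hW1val, hA, hA']
    field_simp
    ring
  have hq : 2 * (z * deriv f z / f z) - z * deriv (deriv f) z / deriv f z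
      = 2 * (1 + W z)⁻¹ - z ^ 3 * deriv ψ z / (1 + W z) := by
    rw [hkey, hderivW]
    have hWzz : W z = z ^ 2 * ψ z := hWfac z
    have h1W' : (1:ℂ) + z ^ 2 * ψ z ≠ 0 := by rw [← hWzz]; exact h1W
    rw [hWzz]
    field_simp [h1W']
    ring
  rw [hq]
  -- real estimates
  set r : ℝ := ‖z‖ with hr_def
  set s : ℝ := ‖ψ z‖ with hs_def
  set x : ℝ := (W z).re with hx_def
  set b : ℝ := ‖1 + W z‖ with hb_def
  have hr0 : 0 < r := norm_pos_iff.mpr hzne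
  have hcub : r ^ 3 + 2 * r ^ 2 < 2 := by
    have hmono : r ^ 3 + 2 * r ^ 2 < r₁ ^ 3 + 2 * r₁ ^ 2 := by
      nlinarith [mul_pos (sub_pos.2 hzr) (show (0:ℝ) < r₁ ^ 2 + r * r₁ + r ^ 2 by positivity),
        mul_pos (sub_pos.2 hzr) (show (0:ℝ) < r₁ + r by positivity)]
    linarith [hroot]
  have hr2 : (0:ℝ) < 1 - r ^ 2 := by nlinarith
  have hs0' : 0 ≤ s := norm_nonneg _
  have hs1 : s ≤ 1 := hψb z hzball
  have habsW : ‖W z‖ = r ^ 2 * s := by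
    rw [hWfac z, norm_mul, norm_pow, hr_def, hs_def]
  have hx_le : |x| ≤ r ^ 2 * s := by
    rw [hx_def, ← habsW]
    exact Complex.abs_re_le_norm _
  have hb0 : 0 < b := norm_pos_iff.mpr h1W
  have hbsq : b ^ 2 = 1 + 2 * x + (r ^ 2 * s) ^ 2 := by
    have h1 : b ^ 2 = normSq (1 + W z) := Complex.sq_norm _
    have h2 : normSq (1 + W z) = 1 + 2 * (W z).re + normSq (W z) := by
      simp only [Complex.normSq_apply, Complex.add_re, Complex.add_im, Complex.one_re,
        Complex.one_im]
      ring
    have h3 : normSq (W z) = (r ^ 2 * s) ^ 2 := by rw [← Complex.sq_norm, habsW]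
    rw [h1, h2, h3, hx_def]
  have hSP : ‖deriv ψ z‖ * (1 - r ^ 2) ≤ 1 - s ^ 2 :=
    schwarz_pick hψa.differentiableOn hψb hzball
  have hx1' : -(r ^ 2 * s) ≤ x := (abs_le.1 hx_le).1
  have hx2' : x ≤ r ^ 2 * s := (abs_le.1 hx_le).2
  have hx0 : 0 < 1 + x := by nlinarith
  have hpoly := core_ineq r s x hr0 hcub hs0' hs1 hx1' hx2'
  have hinvre : ((1 + W z)⁻¹).re = (1 + x) / b ^ 2 := by
    rw [Complex.inv_re, ← Complex.sq_norm]
    have e : (1 + W z).re = 1 + x := by simp [Complex.add_re, hx_def]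
    rw [e]
  have hre1 : ((2 : ℂ) * (1 + W z)⁻¹).re = 2 * (1 + x) / b ^ 2 := by
    have e : ((2 : ℂ) * (1 + W z)⁻¹).re = 2 * ((1 + W z)⁻¹).re := by
      simp [Complex.mul_re]
    rw [e, hinvre]
    ring
  have hT : (z ^ 3 * deriv ψ z / (1 + W z)).re ≤ r ^ 3 * ‖deriv ψ z‖ / b := by
    calc (z ^ 3 * deriv ψ z / (1 + W z)).re ≤ ‖z ^ 3 * deriv ψ z / (1 + W z)‖ :=
          Complex.re_le_norm _
      _ = r ^ 3 * ‖deriv ψ z‖ / b := by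
          rw [norm_div, norm_mul, norm_pow]
  have hψ'b : ‖deriv ψ z‖ ≤ (1 - s ^ 2) / (1 - r ^ 2) := by
    rw [le_div_iff₀ hr2]
    exact hSP
  have hTb : (z ^ 3 * deriv ψ z / (1 + W z)).re ≤ r ^ 3 * (1 - s ^ 2) / ((1 - r ^ 2) * b) := by
    refine le_trans hT ?_
    rw [div_le_div_iff₀ hb0 (mul_pos hr2 hb0)]
    nlinarith [mul_le_mul_of_nonneg_right
      (mul_le_mul_of_nonneg_left hSP (pow_nonneg hr0.le 3)) hb0.le]
  have hCb : r ^ 3 * (1 - s ^ 2) * b < 2 * (1 + x) * (1 - r ^ 2) := by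
    have hsq2 : (r ^ 3 * (1 - s ^ 2) * b) ^ 2 < (2 * (1 + x) * (1 - r ^ 2)) ^ 2 := by
      have e : (r ^ 3 * (1 - s ^ 2) * b) ^ 2
          = (r ^ 3 * (1 - s ^ 2)) ^ 2 * (1 + 2 * x + (r ^ 2 * s) ^ 2) := by
        rw [mul_pow, hbsq]
      rw [e]
      calc (r ^ 3 * (1 - s ^ 2)) ^ 2 * (1 + 2 * x + (r ^ 2 * s) ^ 2)
          < 4 * (1 + x) ^ 2 * (1 - r ^ 2) ^ 2 := hpoly
        _ = (2 * (1 + x) * (1 - r ^ 2)) ^ 2 := by ring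
    have hpos : (0:ℝ) < 2 * (1 + x) * (1 - r ^ 2) := mul_pos (mul_pos two_pos hx0) hr2
    exact lt_of_pow_lt_pow_left₀ 2 hpos.le hsq2
  have hfrac : r ^ 3 * (1 - s ^ 2) / ((1 - r ^ 2) * b) < 2 * (1 + x) / b ^ 2 := by
    rw [div_lt_div_iff₀ (mul_pos hr2 hb0) (pow_pos hb0 2)]
    nlinarith [mul_lt_mul_of_pos_right hCb hb0]
  rw [Complex.sub_re, hre1]
  linarith [hTb, hfrac]
end

section
/- If f is starlike of order 1/2, i.e. f analytic on 𝔻 with f(0)=0, f'(0)=1 and Re(z·f'(z)/f(z)) > 1/2 on 𝔻, then Re(2·z·f'(z)/f(z) − z·f''(z)/f'(z)) > 0 for all |z| < √((√5 − 1)/2) ≈ 0.78615. -/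
open Complex Metric Set

/-- Möbius maps of the disc preserve the disc. -/
lemma mob_mem {c w : ℂ} (hc : ‖c‖ < 1) (hw : ‖w‖ < 1) :
    ‖(c - w) / (1 - (starRingEnd ℂ) c * w)‖ < 1 := by
  have hden : ‖1 - (starRingEnd ℂ) c * w‖ ≠ 0 := by
    intro h
    have h1 : (1 : ℂ) - (starRingEnd ℂ) c * w = 0 := by
      simpa using (norm_eq_zero.mp h)
    have h2 : ‖(starRingEnd ℂ) c * w‖ = 1 := by
      have : (starRingEnd ℂ) c * w = 1 := by linear_combination -h1
      simp [this]
    rw [norm_mul, Complex.norm_conj] at h2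
    nlinarith [norm_nonneg c, norm_nonneg w]
  rw [norm_div, div_lt_one (lt_of_le_of_ne (norm_nonneg _) (Ne.symm hden))]
  have : Complex.normSq (c - w) < Complex.normSq (1 - (starRingEnd ℂ) c * w) := by
    have hc2 : c.re^2 + c.im^2 < 1 := by
      have h := Complex.sq_norm c; rw [Complex.normSq_apply] at h
      nlinarith [norm_nonneg c]
    have hw2 : w.re^2 + w.im^2 < 1 := by
      have h := Complex.sq_norm w; rw [Complex.normSq_apply] at h
      nlinarith [norm_nonneg w]
    simp only [Complex.normSq_apply, Complex.sub_re, Complex.sub_im, Complex.mul_re,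
      Complex.mul_im, Complex.one_re, Complex.one_im, Complex.conj_re, Complex.conj_im]
    nlinarith [sq_nonneg (1 - c.re*w.re + c.im*w.im)]
  have := (Real.sqrt_lt_sqrt (Complex.normSq_nonneg _) this)
  simpa [Complex.norm_def] using this

lemma den_ne {c w : ℂ} (hc : ‖c‖ < 1) (hw : ‖w‖ < 1) :
    (1 : ℂ) - (starRingEnd ℂ) c * w ≠ 0 := by
  intro h
  have h2 : ‖(starRingEnd ℂ) c * w‖ = 1 := by
    have : (starRingEnd ℂ) c * w = 1 := by linear_combination -h
    simp [this]
  rw [norm_mul, Complex.norm_conj] at h2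
  nlinarith [norm_nonneg c, norm_nonneg w]

/-- Schwarz–Pick lemma on the unit disc. -/
lemma schwarzPick {φ : ℂ → ℂ} (hd : DifferentiableOn ℂ φ (ball 0 1))
    (hm : MapsTo φ (ball 0 1) (ball 0 1)) {a : ℂ} (ha : a ∈ ball (0 : ℂ) 1) :
    ‖deriv φ a‖ * (1 - ‖a‖ ^ 2) ≤ 1 - ‖φ a‖ ^ 2 := by
  have ha' : ‖a‖ < 1 := mem_ball_zero_iff.mp ha
  set b := φ a with hb_def
  have hb' : ‖b‖ < 1 := mem_ball_zero_iff.mp (hm ha)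
  set σ : ℂ → ℂ := fun w => (a - w) / (1 - (starRingEnd ℂ) a * w) with hσ_def
  set M : ℂ → ℂ := fun u => (b - u) / (1 - (starRingEnd ℂ) b * u) with hM_def
  set ψ : ℂ → ℂ := fun w => M (φ (σ w)) with hψ_def
  -- σ maps ball to ball
  have hσ_mem : ∀ w ∈ ball (0 : ℂ) 1, σ w ∈ ball (0 : ℂ) 1 := fun w hw =>
    mem_ball_zero_iff.mpr (mob_mem ha' (mem_ball_zero_iff.mp hw))
  have hM_mem : ∀ u ∈ ball (0 : ℂ) 1, M u ∈ ball (0 : ℂ) 1 := fun u hu =>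
    mem_ball_zero_iff.mpr (mob_mem hb' (mem_ball_zero_iff.mp hu))
  -- differentiability of σ at points of the ball
  have hσ_diff : ∀ w ∈ ball (0 : ℂ) 1, DifferentiableAt ℂ σ w := by
    intro w hw
    exact (differentiableAt_const a |>.sub differentiableAt_fun_id).div
      ((differentiableAt_const (1:ℂ)).sub ((differentiableAt_const _).mul differentiableAt_fun_id))
      (den_ne ha' (mem_ball_zero_iff.mp hw))
  have hM_diff : ∀ u ∈ ball (0 : ℂ) 1, DifferentiableAt ℂ M u := by
    intro u hu
    exact (differentiableAt_const b |>.sub differentiableAt_fun_id).div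
      ((differentiableAt_const (1:ℂ)).sub ((differentiableAt_const _).mul differentiableAt_fun_id))
      (den_ne hb' (mem_ball_zero_iff.mp hu))
  have hφ_diff : ∀ w ∈ ball (0 : ℂ) 1, DifferentiableAt ℂ φ w := fun w hw =>
    hd.differentiableAt (isOpen_ball.mem_nhds hw)
  have hψ_diff : DifferentiableOn ℂ ψ (ball 0 1) := by
    intro w hw
    exact (((hM_diff _ (hm (hσ_mem w hw))).comp _ (hφ_diff _ (hσ_mem w hw))).comp w
      (hσ_diff w hw)).differentiableWithinAt
  have hψ_maps : MapsTo ψ (ball (0:ℂ) 1) (ball (0:ℂ) 1) := fun w hw =>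
    hM_mem _ (hm (hσ_mem w hw))
  have hσ0 : σ 0 = a := by simp [hσ_def]
  have hψ0 : ψ 0 = 0 := by simp [hψ_def, hM_def, hσ0, hb_def]
  have h1 : ‖deriv ψ 0‖ ≤ 1 :=
    Complex.norm_deriv_le_one_of_mapsTo_ball hψ_diff
      (fun w hw => by rw [hψ0]; exact ball_subset_closedBall (hψ_maps hw)) one_pos
  -- compute deriv ψ 0
  have hσ_der : HasDerivAt σ ((starRingEnd ℂ) a * a - 1) 0 := by
    have h0 : (1 : ℂ) - (starRingEnd ℂ) a * 0 ≠ 0 := by simp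
    have := (((hasDerivAt_const (0:ℂ) a).sub (hasDerivAt_id 0)).div
      ((hasDerivAt_const (0:ℂ) (1:ℂ)).sub (((hasDerivAt_id (0:ℂ)).const_mul ((starRingEnd ℂ) a)))) h0)
    refine this.congr_deriv ?_
    simp only [Pi.sub_apply, id_eq]
    field_simp
    try ring
  have hM_der : HasDerivAt M (((starRingEnd ℂ) b * b - 1) / (1 - (starRingEnd ℂ) b * b)^2) b := by
    have h0 : (1 : ℂ) - (starRingEnd ℂ) b * b ≠ 0 := den_ne hb' hb'
    have := (((hasDerivAt_const b b).sub (hasDerivAt_id b)).div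
      ((hasDerivAt_const b (1:ℂ)).sub (((hasDerivAt_id b).const_mul ((starRingEnd ℂ) b)))) h0)
    refine this.congr_deriv ?_
    simp only [Pi.sub_apply, id_eq]
    field_simp
    try ring
  have hφ_der : HasDerivAt φ (deriv φ a) a := (hφ_diff a ha).hasDerivAt
  have hψ_der : HasDerivAt ψ
      (((starRingEnd ℂ) b * b - 1) / (1 - (starRingEnd ℂ) b * b)^2 *
        (deriv φ a * ((starRingEnd ℂ) a * a - 1))) 0 := by
    have hφσ : HasDerivAt (fun w => φ (σ w)) (deriv φ a * ((starRingEnd ℂ) a * a - 1)) 0 := by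
      have : HasDerivAt φ (deriv φ a) (σ 0) := by rwa [hσ0]
      exact this.comp 0 hσ_der
    have hMb : HasDerivAt M (((starRingEnd ℂ) b * b - 1) / (1 - (starRingEnd ℂ) b * b)^2)
        (φ (σ 0)) := by rwa [hσ0]
    exact hMb.comp 0 hφσ
  have hderiv_eq : deriv ψ 0 = ((starRingEnd ℂ) b * b - 1) / (1 - (starRingEnd ℂ) b * b)^2 *
      (deriv φ a * ((starRingEnd ℂ) a * a - 1)) := hψ_der.deriv
  rw [hderiv_eq] at h1
  have hconj_a : (starRingEnd ℂ) a * a = (Complex.normSq a : ℂ) := by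
    rw [mul_comm, Complex.mul_conj]
  have hconj_b : (starRingEnd ℂ) b * b = (Complex.normSq b : ℂ) := by
    rw [mul_comm, Complex.mul_conj]
  have hna : Complex.normSq a = ‖a‖ ^ 2 := (Complex.sq_norm a).symm
  have hnb : Complex.normSq b = ‖b‖ ^ 2 := (Complex.sq_norm b).symm
  rw [hconj_a, hconj_b] at h1
  have habs : ‖(↑(Complex.normSq b) - 1) / (1 - ↑(Complex.normSq b))^2 *
      (deriv φ a * (↑(Complex.normSq a) - 1))‖
      = (1 - ‖b‖ ^ 2)⁻¹ * (‖deriv φ a‖ * (1 - ‖a‖ ^ 2)) := by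
    rw [norm_mul, norm_mul, norm_div, norm_pow]
    have e1 : (↑(Complex.normSq b) - 1 : ℂ) = ((Complex.normSq b - 1 : ℝ) : ℂ) := by push_cast; ring
    have e2 : (1 - ↑(Complex.normSq b) : ℂ) = ((1 - Complex.normSq b : ℝ) : ℂ) := by push_cast; ring
    have e3 : (↑(Complex.normSq a) - 1 : ℂ) = ((Complex.normSq a - 1 : ℝ) : ℂ) := by push_cast; ring
    rw [e1, e2, e3, Complex.norm_real, Complex.norm_real, Complex.norm_real, Real.norm_eq_abs, Real.norm_eq_abs, Real.norm_eq_abs]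
    rw [hna, hnb]
    have hb1 : ‖b‖ ^ 2 < 1 := by nlinarith [norm_nonneg b]
    have ha1 : ‖a‖ ^ 2 < 1 := by nlinarith [norm_nonneg a]
    rw [abs_of_neg (by linarith), abs_of_pos (by linarith), abs_of_neg (by linarith)]
    have hbne : (1 - ‖b‖ ^ 2) ≠ 0 := by nlinarith
    field_simp
    ring
  rw [habs] at h1
  have hb1 : 0 < 1 - ‖b‖ ^ 2 := by nlinarith [norm_nonneg b]
  calc ‖deriv φ a‖ * (1 - ‖a‖ ^ 2)
      = (1 - ‖b‖ ^ 2) * ((1 - ‖b‖ ^ 2)⁻¹ *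
        (‖deriv φ a‖ * (1 - ‖a‖ ^ 2))) := by
        field_simp
    _ ≤ (1 - ‖b‖ ^ 2) * 1 := by
        exact mul_le_mul_of_nonneg_left h1 hb1.le
    _ = 1 - ‖b‖ ^ 2 := mul_one _


lemma starlike_aux (z A B C : ℂ) (hz : z ≠ 0) (hA : A ≠ 0) (hB : B ≠ 0) :
    z * ((A / z * C - (B * z - A) / z ^ 2 * B) / B ^ 2) - (1 - A / z / B)
      = (2 - (2 * (z * B / A) - z * C / B)) * (A / z / B) := by
  have hz4 : z ^ 4 * z⁻¹ ^ 4 = 1 := by rw [← mul_pow, mul_inv_cancel₀ hz, one_pow]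
  have hz5 : z ^ 5 * z⁻¹ ^ 4 = z := by
    rw [show (5:ℕ) = 1 + 4 from rfl, pow_add, mul_assoc, pow_one, hz4, mul_one]
  have hB3 : B ^ 3 * B⁻¹ ^ 3 = 1 := by rw [← mul_pow, mul_inv_cancel₀ hB, one_pow]
  have hB4 : B ^ 4 * B⁻¹ ^ 3 = B := by
    rw [show (4:ℕ) = 1 + 3 from rfl, pow_add, mul_assoc, pow_one, hB3, mul_one]
  have hB5 : B ^ 5 * B⁻¹ ^ 3 = B ^ 2 := by
    rw [show (5:ℕ) = 2 + 3 from rfl, pow_add, mul_assoc, hB3, mul_one]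
  field_simp
  ring

set_option maxHeartbeats 1000000 in
theorem starlike_half_D_re_pos (f : ℂ → ℂ)
    (hf : AnalyticOnNhd ℂ f (ball (0 : ℂ) 1))
    (hf0 : f 0 = 0) (hf'0 : deriv f 0 = 1)
    (hst : ∀ z ∈ ball (0 : ℂ) 1, z ≠ 0 → 1 / 2 < (z * deriv f z / f z).re) :
    ∀ z : ℂ, ‖z‖ < Real.sqrt ((Real.sqrt 5 - 1) / 2) → z ≠ 0 →
      0 < (2 * (z * deriv f z / f z) - z * deriv (deriv f) z / deriv f z).re := by
  intro z₀ hz₀lt hz₀ne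
  have h5 : Real.sqrt 5 ^ 2 = 5 := Real.sq_sqrt (by norm_num)
  have h5pos : 1 < Real.sqrt 5 := by nlinarith [Real.sqrt_nonneg 5]
  have hγpos : 0 < (Real.sqrt 5 - 1) / 2 := by linarith
  have hγlt : (Real.sqrt 5 - 1) / 2 < 1 := by nlinarith [Real.sqrt_nonneg 5]
  have hsq1 : Real.sqrt ((Real.sqrt 5 - 1) / 2) < 1 := by
    have := Real.sqrt_lt_sqrt hγpos.le hγlt
    simpa using this
  have hz₀ball : z₀ ∈ ball (0 : ℂ) 1 := mem_ball_zero_iff.mpr (hz₀lt.trans hsq1)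
  set r := ‖z₀‖ with hr_def
  have hrpos : 0 < r := norm_pos_iff.mpr hz₀ne
  have hr1 : r < 1 := hz₀lt.trans hsq1
  have hr2 : r ^ 2 < (Real.sqrt 5 - 1) / 2 := by
    have h := Real.sq_sqrt hγpos.le
    nlinarith [Real.sqrt_nonneg ((Real.sqrt 5 - 1) / 2)]
  -- nonvanishing of deriv f and f
  have hf'ne : ∀ z ∈ ball (0 : ℂ) 1, deriv f z ≠ 0 := by
    intro z hz hdz
    rcases eq_or_ne z 0 with rfl | hne
    · rw [hf'0] at hdz; exact one_ne_zero hdz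
    · have h := hst z hz hne
      rw [hdz, mul_zero, zero_div] at h
      simp at h; linarith
  have hfne : ∀ z ∈ ball (0 : ℂ) 1, z ≠ 0 → f z ≠ 0 := by
    intro z hz hne hfz
    have h := hst z hz hne
    rw [hfz, div_zero] at h
    simp at h; linarith
  have hfd : DifferentiableOn ℂ f (ball (0:ℂ) 1) := hf.differentiableOn
  -- g = dslope f 0
  set g := dslope f 0 with hg_def
  have hgd : DifferentiableOn ℂ g (ball (0:ℂ) 1) :=
    (differentiableOn_dslope (isOpen_ball.mem_nhds (mem_ball_self one_pos))).mpr hfd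
  have hg0 : g 0 = 1 := by rw [hg_def, dslope_same, hf'0]
  have hgz : ∀ z : ℂ, z ≠ 0 → g z = f z / z := by
    intro z hz
    rw [hg_def, dslope_of_ne _ hz, slope_def_field, hf0, sub_zero, sub_zero]
  have hgne : ∀ z ∈ ball (0:ℂ) 1, g z ≠ 0 := by
    intro z hz
    rcases eq_or_ne z 0 with rfl | hne
    · rw [hg0]; exact one_ne_zero
    · rw [hgz z hne]; exact div_ne_zero (hfne z hz hne) hne
  have hdfd : DifferentiableOn ℂ (deriv f) (ball (0:ℂ) 1) := hf.deriv.differentiableOn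
  -- Re (deriv f / g) > 1/2 on the ball
  have hPre : ∀ z ∈ ball (0:ℂ) 1, 1 / 2 < (deriv f z / g z).re := by
    intro z hz
    rcases eq_or_ne z 0 with rfl | hne
    · rw [hf'0, hg0]; norm_num
    · have h := hst z hz hne
      have he : deriv f z / g z = z * deriv f z / f z := by
        rw [hgz z hne]
        field_simp
      rw [he]; exact h
  -- ω
  set ω : ℂ → ℂ := fun z => 1 - g z / deriv f z with hω_def
  have hωd : DifferentiableOn ℂ ω (ball (0:ℂ) 1) :=
    (differentiableOn_const 1).sub (hgd.div hdfd hf'ne)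
  have hω0 : ω 0 = 0 := by simp [hω_def, hg0, hf'0]
  have hωlt : ∀ z ∈ ball (0:ℂ) 1, ‖ω z‖ < 1 := by
    intro z hz
    have hgz' := hgne z hz
    have hfz' := hf'ne z hz
    have hre := hPre z hz
    have heq : ω z = (deriv f z / g z - 1) / (deriv f z / g z) := by
      rw [hω_def]
      field_simp
    set P := deriv f z / g z with hP
    have hPne : P ≠ 0 := by
      intro h; rw [h] at hre; simp at hre; linarith
    rw [heq, norm_div, div_lt_one (norm_pos_iff.mpr hPne)]
    have hns : Complex.normSq (P - 1) < Complex.normSq P := by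
      simp only [Complex.normSq_apply, Complex.sub_re, Complex.sub_im, Complex.one_re,
        Complex.one_im]
      nlinarith [hre]
    nlinarith [norm_nonneg (P - 1), norm_nonneg P, Complex.sq_norm (P - 1),
      Complex.sq_norm P]
  -- φ
  set φ := dslope ω 0 with hφ_def
  have hφd : DifferentiableOn ℂ φ (ball (0:ℂ) 1) :=
    (differentiableOn_dslope (isOpen_ball.mem_nhds (mem_ball_self one_pos))).mpr hωd
  have hφle : ∀ z ∈ ball (0:ℂ) 1, ‖φ z‖ ≤ 1 := by
    intro z hz
    have h := Complex.norm_dslope_le_div_of_mapsTo_ball hωd (fun w hw => by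
      rw [hω0]; exact ball_subset_closedBall (mem_ball_zero_iff.mpr (hωlt w hw))) hz
    simpa using h
  have hωφ : ∀ z : ℂ, z ≠ 0 → ω z = z * φ z := by
    intro z hz
    rw [hφ_def, dslope_of_ne _ hz, slope_def_field, hω0, sub_zero, sub_zero]
    field_simp
  -- Schwarz–Pick bound (with max-modulus case analysis)
  have hSP : ‖deriv φ z₀‖ * (1 - r ^ 2) ≤ 1 - ‖φ z₀‖ ^ 2 := by
    by_cases hconst : ∃ w ∈ ball (0:ℂ) 1, ‖φ w‖ = 1
    · obtain ⟨w, hw, hww⟩ := hconst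
      have hmax : IsMaxOn (norm ∘ φ) (ball (0:ℂ) 1) w := by
        intro x hx
        simp only [Function.comp_apply, hww]
        exact hφle x hx
      have heq := eqOn_of_isPreconnected_of_isMaxOn_norm (convex_ball (0:ℂ) 1).isPreconnected
        isOpen_ball hφd hw hmax
      have hev : φ =ᶠ[nhds z₀] fun _ => φ w :=
        Filter.eventuallyEq_of_mem (isOpen_ball.mem_nhds hz₀ball) heq
      have hder0 : deriv φ z₀ = 0 := by rw [hev.deriv_eq]; exact deriv_const _ _
      have hφz₀ : φ z₀ = φ w := heq hz₀ball
      rw [hder0, hφz₀, hww]; simp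
    · push_neg at hconst
      have hmaps : MapsTo φ (ball (0:ℂ) 1) (ball (0:ℂ) 1) := fun x hx =>
        mem_ball_zero_iff.mpr (lt_of_le_of_ne (hφle x hx) (hconst x hx))
      exact schwarzPick hφd hmaps hz₀ball
  -- derivative computations at z₀
  have hA := hfne z₀ hz₀ball hz₀ne
  have hB := hf'ne z₀ hz₀ball
  have hfz₀d : HasDerivAt f (deriv f z₀) z₀ :=
    (hfd.differentiableAt (isOpen_ball.mem_nhds hz₀ball)).hasDerivAt
  have hf'z₀d : HasDerivAt (deriv f) (deriv (deriv f) z₀) z₀ :=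
    (hdfd.differentiableAt (isOpen_ball.mem_nhds hz₀ball)).hasDerivAt
  have hgev : g =ᶠ[nhds z₀] fun z => f z / z := by
    filter_upwards [compl_singleton_mem_nhds hz₀ne] with z hz
    exact hgz z hz
  have hgder : HasDerivAt g ((deriv f z₀ * z₀ - f z₀) / z₀ ^ 2) z₀ := by
    have h := hfz₀d.div (hasDerivAt_id z₀) hz₀ne
    have h' : HasDerivAt (fun z => f z / z) ((deriv f z₀ * z₀ - f z₀) / z₀ ^ 2) z₀ := by
      refine h.congr_deriv ?_
      simp only [id_eq]
      ring
    exact h'.congr_of_eventuallyEq hgev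
  have hωder : HasDerivAt ω
      ((g z₀ * deriv (deriv f) z₀ - (deriv f z₀ * z₀ - f z₀) / z₀ ^ 2 * deriv f z₀)
        / deriv f z₀ ^ 2) z₀ := by
    have h := (hasDerivAt_const z₀ (1:ℂ)).sub (hgder.div hf'z₀d hB)
    refine h.congr_deriv ?_
    field_simp
    ring
  have hgz₀ : g z₀ = f z₀ / z₀ := hgz z₀ hz₀ne
  have hωz₀ : ω z₀ = 1 - g z₀ / deriv f z₀ := rfl
  have h1ω : (1:ℂ) - ω z₀ = g z₀ / deriv f z₀ := by rw [hωz₀]; ring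
  have h1ωne : (1:ℂ) - ω z₀ ≠ 0 := by
    rw [h1ω]; exact div_ne_zero (hgne z₀ hz₀ball) hB
  -- the key algebraic identity
  have hkey : 2 * (z₀ * deriv f z₀ / f z₀) - z₀ * deriv (deriv f) z₀ / deriv f z₀
      = 2 - (z₀ * deriv ω z₀ - ω z₀) / (1 - ω z₀) := by
    have e : z₀ * deriv ω z₀ - ω z₀
        = (2 - (2 * (z₀ * deriv f z₀ / f z₀) - z₀ * deriv (deriv f) z₀ / deriv f z₀))
          * (1 - ω z₀) := by
      rw [hωder.deriv, h1ω, hωz₀, hgz₀]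
      exact starlike_aux _ _ _ _ hz₀ne hA hB
    rw [e, mul_div_cancel_right₀ _ h1ωne]
    ring
  -- numerator is z₀² ⬝ deriv φ z₀
  have hφz₀d : DifferentiableAt ℂ φ z₀ := hφd.differentiableAt (isOpen_ball.mem_nhds hz₀ball)
  have hnum : z₀ * deriv ω z₀ - ω z₀ = z₀ ^ 2 * deriv φ z₀ := by
    have hev : ω =ᶠ[nhds z₀] fun z => z * φ z := by
      filter_upwards [compl_singleton_mem_nhds hz₀ne] with z hz
      exact hωφ z hz
    have hd : deriv ω z₀ = φ z₀ + z₀ * deriv φ z₀ := by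
      rw [hev.deriv_eq]
      have h := ((hasDerivAt_id z₀).mul hφz₀d.hasDerivAt).deriv
      simp only [id_eq] at h
      rw [show (fun z => z * φ z) = id * φ from rfl, h]; ring
    rw [hd, hωφ z₀ hz₀ne]; ring
  -- set up the real estimates
  set m := ‖φ z₀‖ with hm_def
  have hm0 : 0 ≤ m := norm_nonneg _
  have hm1 : m ≤ 1 := hφle z₀ hz₀ball
  have habsω : ‖ω z₀‖ = r * m := by rw [hωφ z₀ hz₀ne, norm_mul]
  have hd1 : 0 < 1 - r ^ 2 := by nlinarith
  have hd2 : 0 < 1 - r * m := by nlinarith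
  have h1ωabs : 1 - r * m ≤ ‖1 - ω z₀‖ := by
    have h := norm_sub_norm_le (1:ℂ) (ω z₀)
    simpa [habsω] using h
  have h14 : r ^ 4 + r ^ 2 < 1 := by
    have hγr : 0 < (Real.sqrt 5 - 1) / 2 + r ^ 2 := by positivity
    have h4 : r ^ 4 < ((Real.sqrt 5 - 1) / 2) ^ 2 := by nlinarith [hr2, hγr]
    nlinarith [h5]
  have hfin : r ^ 2 * (1 - m ^ 2) < 2 * ((1 - r * m) * (1 - r ^ 2)) := by
    nlinarith [sq_nonneg (r * m - (1 - r ^ 2)), h14]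
  -- bound the real part of the quotient
  have hQabs : ‖(z₀ * deriv ω z₀ - ω z₀) / (1 - ω z₀)‖ < 2 := by
    rw [norm_div, hnum, norm_mul, norm_pow]
    rw [div_lt_iff₀ (norm_pos_iff.mpr h1ωne)]
    calc r ^ 2 * ‖deriv φ z₀‖
        ≤ r ^ 2 * ((1 - m ^ 2) / (1 - r ^ 2)) := by
          gcongr
          rw [le_div_iff₀ hd1]
          exact hSP
      _ < 2 * (1 - r * m) := by
          rw [show r ^ 2 * ((1 - m ^ 2) / (1 - r ^ 2)) = r ^ 2 * (1 - m ^ 2) / (1 - r ^ 2)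
            from by ring, div_lt_iff₀ hd1]
          nlinarith [hfin]
      _ ≤ 2 * ‖1 - ω z₀‖ := by
          have h2 : (0:ℝ) ≤ 2 := by norm_num
          exact mul_le_mul_of_nonneg_left h1ωabs h2
  have hQre : ((z₀ * deriv ω z₀ - ω z₀) / (1 - ω z₀)).re < 2 :=
    lt_of_le_of_lt (Complex.re_le_norm _) hQabs
  rw [hkey]
  have : ((2:ℂ) - (z₀ * deriv ω z₀ - ω z₀) / (1 - ω z₀)).re
      = 2 - ((z₀ * deriv ω z₀ - ω z₀) / (1 - ω z₀)).re := by
    simp [Complex.sub_re]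
  rw [this]
  linarith
end

section
/- If f ∈ 𝒢, i.e. f analytic on 𝔻 with f(0)=0, f'(0)=1 and Re(1 + z·f''(z)/f'(z)) < 3/2 on 𝔻, and if z·f'(z)/f(z) = (1 − ω(z))/(1 − ω(z)/2) for some analytic ω with ω(0)=0, |ω| < 1, then Re(2·z·f'(z)/f(z) − z·f''(z)/f'(z)) > 0 for all |z| < 2/3. -/
open Complex Metric

theorem G_D_re_pos (f ω : ℂ → ℂ)
    (hf : AnalyticOnNhd ℂ f (ball (0 : ℂ) 1))
    (hf0 : f 0 = 0) (hf'0 : deriv f 0 = 1)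
    (hG : ∀ z ∈ ball (0 : ℂ) 1,
      (1 + z * deriv (deriv f) z / deriv f z).re < 3 / 2)
    (hω : AnalyticOnNhd ℂ ω (ball (0 : ℂ) 1))
    (hω0 : ω 0 = 0)
    (hω1 : ∀ z ∈ ball (0 : ℂ) 1, ‖ω z‖ < 1)
    (hrep : ∀ z ∈ ball (0 : ℂ) 1, z ≠ 0 →
      z * deriv f z / f z = (1 - ω z) / (1 - ω z / 2)) :
    ∀ z : ℂ, ‖z‖ < 2 / 3 → z ≠ 0 →
      0 < (2 * (z * deriv f z / f z) - z * deriv (deriv f) z / deriv f z).re := by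
  intro z hz hz0
  have hz1 : z ∈ ball (0 : ℂ) 1 := by
    simp only [mem_ball, dist_zero_right]
    linarith
  -- Schwarz lemma: |ω z| ≤ |z|
  have hschwarz : ‖ω z‖ ≤ ‖z‖ := by
    have hmaps : Set.MapsTo ω (ball (0 : ℂ) 1) (ball (0 : ℂ) 1) := by
      intro x hx
      simp only [mem_ball, dist_zero_right]
      exact hω1 x hx
    have := Complex.dist_le_dist_of_mapsTo_ball_self
      (hω.differentiableOn) (by rw [hω0]; exact hmaps.mono_right ball_subset_closedBall) hz1
    simpa [dist_zero_right, hω0] using this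
  set w := ω z with hw
  have ha : ‖w‖ < 2 / 3 := lt_of_le_of_lt hschwarz hz
  have ha0 : (0 : ℝ) ≤ ‖w‖ := norm_nonneg _
  -- 2 - w ≠ 0 and 1 - w/2 ≠ 0
  have h2w : ‖(2 : ℂ) - w‖ ≥ 2 - ‖w‖ := by
    have : ‖(2 : ℂ)‖ ≤ ‖(2 : ℂ) - w‖ + ‖w‖ := by
      calc ‖(2 : ℂ)‖ = ‖((2 : ℂ) - w) + w‖ := by ring_nf
        _ ≤ ‖(2 : ℂ) - w‖ + ‖w‖ := norm_add_le _ _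
    have h2 : ‖(2 : ℂ)‖ = 2 := by norm_num
    linarith [this, h2.symm ▸ this]
  have h2wpos : (0 : ℝ) < ‖(2 : ℂ) - w‖ := by linarith
  have h2wne : (2 : ℂ) - w ≠ 0 := by
    intro h
    rw [h] at h2wpos
    simp at h2wpos
  have h1wne : (1 : ℂ) - w / 2 ≠ 0 := by
    intro h
    apply h2wne
    have : (2 : ℂ) * (1 - w / 2) = 2 - w := by ring
    rw [← this, h, mul_zero]
  -- rewrite p
  have hrepz := hrep z hz1 hz0
  rw [hrepz]
  -- (1 - w)/(1 - w/2) = 1 - w/(2 - w)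
  have hkey : (1 - w) / (1 - w / 2) = 1 - w / (2 - w) := by
    field_simp
    ring
  rw [hkey]
  -- Re bound on w/(2-w)
  have hre1 : (w / (2 - w)).re ≤ ‖w‖ / (2 - ‖w‖) := by
    calc (w / (2 - w)).re ≤ ‖w / (2 - w)‖ := Complex.re_le_norm _
      _ = ‖w‖ / ‖(2 : ℂ) - w‖ := by rw [norm_div]
      _ ≤ ‖w‖ / (2 - ‖w‖) := by
          apply div_le_div_of_nonneg_left ha0 (by linarith) h2w
  have hre2 : ‖w‖ / (2 - ‖w‖) < 1 / 2 := by
    rw [div_lt_div_iff₀ (by linarith) (by norm_num)]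
    linarith
  have hp : (1 / 2 : ℝ) < ((1 : ℂ) - w / (2 - w)).re := by
    simp only [Complex.sub_re, Complex.one_re]
    linarith
  -- Re(q) < 1/2
  have hq : (z * deriv (deriv f) z / deriv f z).re < 1 / 2 := by
    have := hG z hz1
    simp only [Complex.add_re, Complex.one_re] at this
    linarith
  simp only [Complex.sub_re, Complex.mul_re, Complex.re_ofNat, Complex.im_ofNat,
    Complex.one_re] at hp ⊢
  linarith
end

section
/- If f is starlike, i.e. f analytic on 𝔻 with f(0)=0, f'(0)=1 and Re(z·f'(z)/f(z)) > 0 on 𝔻, then Re(2·z·f'(z)/f(z) − z·f''(z)/f'(z)) > 0 for all |z| < 1/2. -/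
open Complex Metric

open Set

set_option maxHeartbeats 1000000

lemma herglotz_bound (p : ℂ → ℂ) (hp : AnalyticOnNhd ℂ p (ball (0:ℂ) 1))
    (hp0 : p 0 = 1) (hre : ∀ w ∈ ball (0:ℂ) 1, 0 < (p w).re)
    (z : ℂ) (hz : ‖z‖ < 1/2) :
    0 < (p z + 1 - z * deriv p z / p z).re := by
  have hr0 : 0 ≤ ‖z‖ := norm_nonneg z
  have hz1 : ‖z‖ < 1 := by linarith
  have hzb : z ∈ ball (0:ℂ) 1 := by simpa [mem_ball_zero_iff] using hz1
  set r := ‖z‖ with hrdef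
  -- denominators for ω
  have hpne : ∀ w ∈ ball (0:ℂ) 1, p w + 1 ≠ 0 := by
    intro w hw h
    have h1 := hre w hw
    have h2 : (p w + 1).re = 0 := by rw [h]; simp
    simp only [Complex.add_re, Complex.one_re] at h2
    linarith
  set ω : ℂ → ℂ := fun w => (p w - 1)/(p w + 1) with hωdef
  have hωd : DifferentiableOn ℂ ω (ball (0:ℂ) 1) := fun w hw =>
    ((((hp w hw).sub analyticAt_const).div ((hp w hw).add analyticAt_const)
      (hpne w hw)).differentiableAt).differentiableWithinAt
  have hωlt : ∀ w ∈ ball (0:ℂ) 1, ‖p w - 1‖ < ‖p w + 1‖ := by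
    intro w hw
    have h4 : Complex.normSq (p w - 1) < Complex.normSq (p w + 1) := by
      simp only [Complex.normSq_apply, Complex.sub_re, Complex.sub_im, Complex.add_re,
        Complex.add_im, Complex.one_re, Complex.one_im]
      nlinarith [hre w hw]
    have h5 := Real.sqrt_lt_sqrt (Complex.normSq_nonneg _) h4
    rwa [← Complex.norm_def, ← Complex.norm_def] at h5
  have hωmaps : MapsTo ω (ball (0:ℂ) 1) (ball (0:ℂ) 1) := by
    intro w hw
    rw [mem_ball_zero_iff]
    show ‖(p w - 1)/(p w + 1)‖ < 1
    rw [norm_div]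
    have hpos : 0 < ‖p w + 1‖ := norm_pos_iff.mpr (hpne w hw)
    rw [div_lt_one hpos]
    exact hωlt w hw
  have hω0 : ω 0 = 0 := by simp [hωdef, hp0]
  have hωz : ‖ω z‖ ≤ r :=
    Complex.norm_le_norm_of_mapsTo_ball_self hωd (hωmaps.mono_right ball_subset_closedBall) hω0 hz1
  -- express p z via w = ω z and get the lower bound on (p z).re
  have hApos : 0 < (p z).re := hre z hzb
  have hwlt : ‖ω z‖ < 1 := lt_of_le_of_lt hωz (by linarith)
  have hwne1 : (1:ℂ) - ω z ≠ 0 := by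
    intro h
    have : ω z = 1 := by linear_combination -h
    rw [this] at hwlt; simp at hwlt
  have hpz : p z = (1 + ω z)/(1 - ω z) := by
    have h1 : ω z * (p z + 1) = p z - 1 := div_mul_cancel₀ _ (hpne z hzb)
    field_simp
    linear_combination -h1
  have hA : (1 - r)/(1 + r) ≤ (p z).re := by
    have hs : 0 < Complex.normSq (1 - ω z) := Complex.normSq_pos.mpr hwne1
    have hkey : (p z).re = (1 - Complex.normSq (ω z)) / Complex.normSq (1 - ω z) := by
      rw [hpz, Complex.div_re]
      rw [← add_div]
      congr 1
      simp only [Complex.normSq_apply, Complex.add_re, Complex.add_im, Complex.sub_re,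
        Complex.sub_im, Complex.one_re, Complex.one_im]
      ring
    rw [hkey, div_le_div_iff₀ (by linarith) hs]
    have h1 : (ω z).re^2 + (ω z).im^2 ≤ r^2 := by
      have := Complex.sq_norm (ω z)
      simp only [Complex.normSq_apply] at this
      nlinarith [hωz, norm_nonneg (ω z)]
    have h2 : -r ≤ (ω z).re := by
      have h := Complex.abs_re_le_norm (ω z)
      have := abs_le.mp h
      linarith [hωz, this.1]
    simp only [Complex.normSq_apply, Complex.sub_re, Complex.sub_im, Complex.one_re,
      Complex.one_im]
    nlinarith
  -- Schwarz–Pick step: bound |deriv p z|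
  set c := p z with hcdef
  have hcne : c ≠ 0 := by
    intro h; rw [h] at hApos; simp at hApos
  have hden : ∀ w ∈ ball (0:ℂ) 1, p w + (starRingEnd ℂ) c ≠ 0 := by
    intro w hw h
    have h2 : (p w + (starRingEnd ℂ) c).re = 0 := by rw [h]; simp
    simp only [Complex.add_re, Complex.conj_re] at h2
    have := hre w hw
    linarith
  set G : ℂ → ℂ := fun w => (p w - c)/(p w + (starRingEnd ℂ) c) with hGdef
  have hGd : DifferentiableOn ℂ G (ball (0:ℂ) 1) := fun w hw =>
    ((((hp w hw).sub analyticAt_const).div ((hp w hw).add analyticAt_const)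
      (hden w hw)).differentiableAt).differentiableWithinAt
  have hGmaps : MapsTo G (ball (0:ℂ) 1) (ball (0:ℂ) 1) := by
    intro w hw
    rw [mem_ball_zero_iff]
    show ‖(p w - c)/(p w + (starRingEnd ℂ) c)‖ < 1
    rw [norm_div, div_lt_one (norm_pos_iff.mpr (hden w hw))]
    have h4 : Complex.normSq (p w - c) < Complex.normSq (p w + (starRingEnd ℂ) c) := by
      simp only [Complex.normSq_apply, Complex.sub_re, Complex.sub_im, Complex.add_re,
        Complex.add_im, Complex.conj_re, Complex.conj_im]
      nlinarith [hre w hw, hApos]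
    have h5 := Real.sqrt_lt_sqrt (Complex.normSq_nonneg _) h4
    rw [← Complex.norm_def, ← Complex.norm_def] at h5
    exact h5
  set φ : ℂ → ℂ := fun u => (u + z)/(1 + (starRingEnd ℂ) z * u) with hφdef
  have hφden : ∀ u ∈ ball (0:ℂ) 1, (1 : ℂ) + (starRingEnd ℂ) z * u ≠ 0 := by
    intro u hu h
    have hu1 : ‖u‖ < 1 := by simpa [mem_ball_zero_iff] using hu
    have h1 : ‖(starRingEnd ℂ) z * u‖ < 1 := by
      rw [norm_mul, Complex.norm_conj]
      nlinarith [norm_nonneg u]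
    have h2 : (starRingEnd ℂ) z * u = -1 := by linear_combination h
    rw [h2] at h1; simp at h1
  have hφd : DifferentiableOn ℂ φ (ball (0:ℂ) 1) := by
    intro u hu
    exact (((differentiableAt_id.add_const z).div
      ((differentiableAt_id.const_mul _).const_add 1) (hφden u hu))).differentiableWithinAt
  have hφmaps : MapsTo φ (ball (0:ℂ) 1) (ball (0:ℂ) 1) := by
    intro u hu
    have hu1 : ‖u‖ < 1 := by simpa [mem_ball_zero_iff] using hu
    rw [mem_ball_zero_iff]
    show ‖(u + z)/(1 + (starRingEnd ℂ) z * u)‖ < 1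
    rw [norm_div, div_lt_one (norm_pos_iff.mpr (hφden u hu))]
    have hkey : Complex.normSq (1 + (starRingEnd ℂ) z * u) - Complex.normSq (u + z)
        = (1 - Complex.normSq z) * (1 - Complex.normSq u) := by
      simp only [Complex.normSq_apply, Complex.add_re, Complex.add_im, Complex.mul_re,
        Complex.mul_im, Complex.one_re, Complex.one_im, Complex.conj_re, Complex.conj_im]
      ring
    have hz2 : Complex.normSq z < 1 := by
      rw [← Complex.sq_norm]; nlinarith
    have hu2 : Complex.normSq u < 1 := by
      rw [← Complex.sq_norm]; nlinarith [norm_nonneg u]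
    have h4 : Complex.normSq (u + z) < Complex.normSq (1 + (starRingEnd ℂ) z * u) := by
      nlinarith
    have h5 := Real.sqrt_lt_sqrt (Complex.normSq_nonneg _) h4
    rwa [← Complex.norm_def, ← Complex.norm_def] at h5
  -- compose and apply Schwarz
  have hφ0 : φ 0 = z := by simp [hφdef]
  have hcomp0 : (G ∘ φ) 0 = 0 := by
    simp only [Function.comp_apply, hφ0, hGdef]
    rw [sub_self, zero_div]
  have hd : DifferentiableOn ℂ (G ∘ φ) (ball (0:ℂ) 1) := hGd.comp hφd hφmaps
  have hmaps : MapsTo (G ∘ φ) (ball (0:ℂ) 1) (ball ((G ∘ φ) 0) 1) := by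
    rw [hcomp0]; exact hGmaps.comp hφmaps
  have hschwarz : ‖deriv (G ∘ φ) 0‖ ≤ 1 / 1 :=
    Complex.norm_deriv_le_div_of_mapsTo_ball hd (hmaps.mono_right ball_subset_closedBall) one_pos
  -- compute deriv (G ∘ φ) 0
  have hpz' : HasDerivAt p (deriv p z) z := ((hp z hzb).differentiableAt).hasDerivAt
  have hG' : HasDerivAt G (deriv p z / (c + (starRingEnd ℂ) c)) z := by
    have h1 : HasDerivAt (fun w => p w - c) (deriv p z) z := hpz'.sub_const c
    have h2 : HasDerivAt (fun w => p w + (starRingEnd ℂ) c) (deriv p z) z :=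
      hpz'.add_const _
    have h3 := h1.fun_div h2 (hden z hzb)
    refine h3.congr_deriv (Eq.symm ?_)
    have hcc : c + (starRingEnd ℂ) c ≠ 0 := hden z hzb
    rw [← hcdef]
    field_simp
    ring
  have hφ' : HasDerivAt φ (1 - (starRingEnd ℂ) z * z) 0 := by
    have h1 : HasDerivAt (fun u : ℂ => u + z) 1 0 := (hasDerivAt_id 0).add_const z
    have h2 : HasDerivAt (fun u : ℂ => (1:ℂ) + (starRingEnd ℂ) z * u) ((starRingEnd ℂ) z) 0 := by
      simpa using ((hasDerivAt_id 0).const_mul ((starRingEnd ℂ) z)).const_add (1:ℂ)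
    have h3 := h1.fun_div h2 (hφden 0 (mem_ball_self one_pos))
    refine h3.congr_deriv (Eq.symm ?_)
    simp only [mul_zero, add_zero, one_mul, zero_add, mul_one, one_pow, div_one]
    ring
  have hh' : HasDerivAt (G ∘ φ)
      (deriv p z / (c + (starRingEnd ℂ) c) * (1 - (starRingEnd ℂ) z * z)) 0 := by
    exact HasDerivAt.comp_of_eq 0 hG' hφ' hφ0.symm
  rw [hh'.deriv] at hschwarz
  -- turn the Schwarz bound into a real inequality
  have habs1 : ‖1 - (starRingEnd ℂ) z * z‖ = 1 - r^2 := by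
    have : (starRingEnd ℂ) z * z = (Complex.normSq z : ℂ) := by
      rw [mul_comm, Complex.mul_conj]
    rw [this]
    rw [show (1:ℂ) - (Complex.normSq z : ℂ) = ((1 - Complex.normSq z : ℝ) : ℂ) by push_cast; ring]
    rw [Complex.norm_real, Real.norm_eq_abs, _root_.abs_of_nonneg (by nlinarith [Complex.sq_norm z] : (0:ℝ) ≤ 1 - Complex.normSq z)]
    rw [← Complex.sq_norm]
  have habs2 : ‖c + (starRingEnd ℂ) c‖ = 2 * c.re := by
    rw [Complex.add_conj, Complex.norm_real, Real.norm_eq_abs, _root_.abs_of_nonneg (by linarith : (0:ℝ) ≤ 2 * c.re)]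
  have hd2 : ‖deriv p z‖ * (1 - r^2) ≤ 2 * c.re := by
    have h1 : ‖deriv p z‖ / (2 * c.re) * (1 - r^2) ≤ 1 := by
      have := hschwarz
      rw [norm_mul, norm_div] at this
      rw [habs1, habs2] at this
      linarith
    have h2 : 0 < 2 * c.re := by linarith
    calc ‖deriv p z‖ * (1 - r^2)
        = (‖deriv p z‖ / (2 * c.re) * (1 - r^2)) * (2 * c.re) := by
          field_simp
      _ ≤ 1 * (2 * c.re) := by
          apply mul_le_mul_of_nonneg_right h1 (le_of_lt h2)
      _ = 2 * c.re := by ring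
  -- final arithmetic
  have hCpos : 0 < ‖c‖ := norm_pos_iff.mpr hcne
  have hAc : c.re ≤ ‖c‖ := Complex.re_le_norm c
  have hre2 : (z * deriv p z / c).re ≤ r * ‖deriv p z‖ / ‖c‖ := by
    calc (z * deriv p z / c).re ≤ ‖z * deriv p z / c‖ := Complex.re_le_norm _
      _ = r * ‖deriv p z‖ / ‖c‖ := by
          rw [norm_div, norm_mul]
  have hgoal : (c + 1 - z * deriv p z / c).re = c.re + 1 - (z * deriv p z / c).re := by
    simp [Complex.sub_re, Complex.add_re]
  rw [hgoal]
  have hM0 : 0 ≤ ‖deriv p z‖ := norm_nonneg _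
  have h1r2 : 0 < 1 - r^2 := by nlinarith
  have step : r * ‖deriv p z‖ / ‖c‖ ≤ 2*r/(1 - r^2) := by
    rw [div_le_div_iff₀ hCpos h1r2]
    have e1 := mul_le_mul_of_nonneg_left hd2 hr0
    have e2 := mul_le_mul_of_nonneg_left hAc hr0
    nlinarith [e1, e2]
  have hlast : 2*r/(1 - r^2) < c.re + 1 := by
    rw [div_lt_iff₀ h1r2]
    have hA' : 1 - r ≤ c.re * (1 + r) := by
      rw [div_le_iff₀ (by linarith : (0:ℝ) < 1 + r)] at hA
      linarith
    nlinarith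
  linarith [hre2, step, hlast]

theorem starlike_D_re_pos (f : ℂ → ℂ)
    (hf : AnalyticOnNhd ℂ f (ball (0 : ℂ) 1))
    (hf0 : f 0 = 0) (hf'0 : deriv f 0 = 1)
    (hst : ∀ z ∈ ball (0 : ℂ) 1, z ≠ 0 → 0 < (z * deriv f z / f z).re) :
    ∀ z : ℂ, ‖z‖ < 1 / 2 → z ≠ 0 →
      0 < (2 * (z * deriv f z / f z) - z * deriv (deriv f) z / deriv f z).re := by
  have h0b : (0:ℂ) ∈ ball (0:ℂ) 1 := mem_ball_self one_pos
  have hfne : ∀ w ∈ ball (0:ℂ) 1, w ≠ 0 → f w ≠ 0 := by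
    intro w hw hw0 h
    have h2 := hst w hw hw0
    rw [h, div_zero] at h2
    simp at h2
  set g : ℂ → ℂ := dslope f 0 with hgdef
  have hgval : ∀ w : ℂ, w ≠ 0 → g w = f w / w := by
    intro w hw
    rw [hgdef, dslope_of_ne _ hw, slope_def_field, hf0]
    simp
  have hg0 : g 0 = 1 := by rw [hgdef, dslope_same]; exact hf'0
  have hgne : ∀ w ∈ ball (0:ℂ) 1, g w ≠ 0 := by
    intro w hw
    rcases eq_or_ne w 0 with rfl | hw0
    · rw [hg0]; exact one_ne_zero
    · rw [hgval w hw0]; exact div_ne_zero (hfne w hw hw0) hw0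
  have hganal : AnalyticOnNhd ℂ g (ball (0:ℂ) 1) := by
    intro w hw
    rcases eq_or_ne w 0 with rfl | hw0
    · obtain ⟨q, hq⟩ := hf 0 h0b
      exact hq.has_fpower_series_dslope_fslope.analyticAt
    · have h1 : AnalyticAt ℂ (fun u => f u / u) w :=
        (hf w hw).div analyticAt_id hw0
      apply h1.congr
      filter_upwards [eventually_ne_nhds hw0] with u hu
      exact (hgval u hu).symm
  have hfda : AnalyticOnNhd ℂ (deriv f) (ball (0:ℂ) 1) := hf.deriv
  set p : ℂ → ℂ := fun w => deriv f w / g w with hpdef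
  have hpanal : AnalyticOnNhd ℂ p (ball (0:ℂ) 1) := fun w hw =>
    (hfda w hw).div (hganal w hw) (hgne w hw)
  have hp0 : p 0 = 1 := by simp only [hpdef, hf'0, hg0]; norm_num
  have hpval : ∀ w ∈ ball (0:ℂ) 1, w ≠ 0 → p w = w * deriv f w / f w := by
    intro w hw hw0
    simp only [hpdef]
    rw [hgval w hw0, div_div_eq_mul_div, mul_comm]
  have hpre : ∀ w ∈ ball (0:ℂ) 1, 0 < (p w).re := by
    intro w hw
    rcases eq_or_ne w 0 with rfl | hw0
    · rw [hp0]; simp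
    · rw [hpval w hw hw0]; exact hst w hw hw0
  intro z hz hz0
  have hz1 : ‖z‖ < 1 := by linarith [norm_nonneg z]
  have hzb : z ∈ ball (0:ℂ) 1 := by simpa [mem_ball_zero_iff] using hz1
  have key := herglotz_bound p hpanal hp0 hpre z hz
  have hfz : f z ≠ 0 := hfne z hzb hz0
  have hDne : deriv f z ≠ 0 := by
    intro h
    have h2 := hst z hzb hz0
    rw [h] at h2
    simp at h2
  have hfd : HasDerivAt f (deriv f z) z := ((hf z hzb).differentiableAt).hasDerivAt
  have hfd2 : HasDerivAt (deriv f) (deriv (deriv f) z) z :=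
    ((hfda z hzb).differentiableAt).hasDerivAt
  have hN : HasDerivAt (fun u => u * deriv f u) (1 * deriv f z + z * deriv (deriv f) z) z :=
    (hasDerivAt_id z).mul hfd2
  have hq : HasDerivAt (fun u => u * deriv f u / f u)
      (((1 * deriv f z + z * deriv (deriv f) z) * f z - z * deriv f z * deriv f z) / f z ^ 2) z :=
    hN.div hfd hfz
  have hp' : HasDerivAt p
      (((1 * deriv f z + z * deriv (deriv f) z) * f z - z * deriv f z * deriv f z) / f z ^ 2) z := by
    apply hq.congr_of_eventuallyEq
    filter_upwards [eventually_ne_nhds hz0] with u hu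
    simp only [hpdef]
    rw [hgval u hu, div_div_eq_mul_div, mul_comm]
  have hdp := hp'.deriv
  have hiden : p z + 1 - z * deriv p z / p z
      = 2 * (z * deriv f z / f z) - z * deriv (deriv f) z / deriv f z := by
    rw [hdp]
    simp only [hpdef]
    rw [hgval z hz0]
    field_simp
    ring
  rw [← hiden]
  exact key
end
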